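/- For every real number t > 1 and every real number x > 0, the quantity S(x,t) = t + (t−1)·cosh²(tx)/sinh²((t−1)x) − cosh(x)cosh(tx)/(x·sinh((t−1)x)) satisfies S(x,t) > (2+4t)/3. -/

import Mathlib

open Real Set

lemma aux_deriv_le {f f' : ℝ → ℝ} (hd : ∀ y, HasDerivAt f (f' y) y)
    (h0 : ∀ y ∈ interior (Ici (0:ℝ)), 0 ≤ f' y) : MonotoneOn f (Ici 0) := by
  apply monotoneOn_of_deriv_nonneg (convex_Ici 0)
  · exact (HasDerivAt.continuousOn fun y _ => hd y)
  · intro y hy; exact (hd y).differentiableAt.differentiableWithinAt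
  · intro y hy; rw [(hd y).deriv]; exact h0 y hy

lemma aux1 : ∀ y : ℝ, 0 ≤ y → Real.sinh y ≤ y * Real.cosh y := by
  have hd : ∀ y : ℝ, HasDerivAt (fun y => y * Real.cosh y - Real.sinh y)
      (y * Real.sinh y) y := by
    intro y
    have h1 := (hasDerivAt_id y).mul (Real.hasDerivAt_cosh y)
    simp only [id_eq, one_mul] at h1
    have h2 := h1.sub (Real.hasDerivAt_sinh y)
    convert h2 using 1
    all_goals first | rfl | ring
  have hm := aux_deriv_le hd (by
    intro y hy
    rw [interior_Ici, mem_Ioi] at hy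
    have h3 : 0 ≤ Real.sinh y := Real.sinh_nonneg_iff.2 hy.le
    have := hy.le
    positivity)
  intro y hy
  have := hm (mem_Ici.2 le_rfl) (mem_Ici.2 hy) hy
  simpa using this

lemma aux2 : ∀ y : ℝ, 0 ≤ y → 2 * Real.cosh y ≤ y * Real.sinh y + 2 := by
  have hd : ∀ y : ℝ, HasDerivAt (fun y => y * Real.sinh y + 2 - 2 * Real.cosh y)
      (y * Real.cosh y - Real.sinh y) y := by
    intro y
    have h1 := (hasDerivAt_id y).mul (Real.hasDerivAt_sinh y)
    simp only [id_eq, one_mul] at h1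
    have h2 := (h1.add_const 2).sub ((Real.hasDerivAt_cosh y).const_mul 2)
    convert h2 using 1
    all_goals first | rfl | ring
  have hm := aux_deriv_le hd (by
    intro y hy
    rw [interior_Ici, mem_Ioi] at hy
    have := aux1 y hy.le
    linarith)
  intro y hy
  have := hm (mem_Ici.2 le_rfl) (mem_Ici.2 hy) hy
  simp only [Real.sinh_zero, Real.cosh_zero] at this
  linarith

lemma aux3 : ∀ y : ℝ, 0 ≤ y → 3 * Real.sinh y ≤ y * Real.cosh y + 2 * y := by
  have hd : ∀ y : ℝ, HasDerivAt (fun y => y * Real.cosh y + 2 * y - 3 * Real.sinh y)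
      (y * Real.sinh y + 2 - 2 * Real.cosh y) y := by
    intro y
    have h1 := (hasDerivAt_id y).mul (Real.hasDerivAt_cosh y)
    simp only [id_eq, one_mul] at h1
    have h2 := (h1.add ((hasDerivAt_id y).const_mul 2)).sub
      ((Real.hasDerivAt_sinh y).const_mul 3)
    simp only [id_eq, mul_one] at h2
    convert h2 using 1
    all_goals first | rfl | ring
  have hm := aux_deriv_le hd (by
    intro y hy
    rw [interior_Ici, mem_Ioi] at hy
    have := aux2 y hy.le
    linarith)
  intro y hy
  have := hm (mem_Ici.2 le_rfl) (mem_Ici.2 hy) hy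
  simp only [Real.sinh_zero, Real.cosh_zero] at this
  linarith

lemma key_ineq (s : ℝ) (hs : 0 ≤ s) :
    3 * Real.sinh s * Real.cosh s ≤ 2 * s * Real.cosh s ^ 2 + s := by
  have h := aux3 (2 * s) (by linarith)
  rw [Real.sinh_two_mul, Real.cosh_two_mul] at h
  have h2 : Real.sinh s ^ 2 = Real.cosh s ^ 2 - 1 := by
    have := Real.cosh_sq' s
    linarith
  nlinarith [h, h2]


lemma poly_main (t x s A B Cs Ss : ℝ) (hsd : s = (t - 1) * x)
    (ht1 : 0 < t - 1) (hx : 0 < x) (hA1 : 1 < A) (hBx : x < B)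
    (hCs0 : 0 < Cs) (hSs0 : 0 < Ss) (hsCs : Ss ≤ s * Cs)
    (h1 : s * Ss ^ 2 ≤ 3 * Cs * (s * Cs - Ss)) (hA2 : A ^ 2 = 1 + B ^ 2) :
    (2 + t) / 3 * (x * Ss ^ 2) <
      (t - 1) * (A * Cs + B * Ss) ^ 2 * x - A * (A * Cs + B * Ss) * Ss := by
  subst hsd
  have hA0 : (0:ℝ) < A := by linarith
  have hB0 : (0:ℝ) < B := by linarith
  set c := A * Cs + B * Ss with hc_def
  have hc_pos : 0 < c := add_pos (mul_pos hA0 hCs0) (mul_pos hB0 hSs0)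
  have hSs2 : (0:ℝ) < Ss ^ 2 := pow_pos hSs0 2
  have h2 : (t - 1) * c ^ 2 * x - A * c * Ss
      = c * (A * (((t-1)*x) * Cs - Ss) + ((t-1)*x) * B * Ss) := by ring
  rw [h2, ← mul_lt_mul_iff_of_pos_right (show (0:ℝ) < 3 * Cs by linarith)]
  have expand : c * (A * (((t-1)*x) * Cs - Ss) + ((t-1)*x) * B * Ss) * (3 * Cs)
      = c * A * (3 * Cs * (((t-1)*x) * Cs - Ss)) + 3 * ((t-1)*x) * B * Ss * Cs * c := by ring
  rw [expand]
  have step1 : c * A * (((t-1)*x) * Ss ^ 2) ≤ c * A * (3 * Cs * (((t-1)*x) * Cs - Ss)) :=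
    mul_le_mul_of_nonneg_left h1 (mul_pos hc_pos hA0).le
  have hexp : c * A * (((t-1)*x) * Ss ^ 2) + 3 * ((t-1)*x) * B * Ss * Cs * c
      = (t-1)*x*(A^2*Cs*Ss^2) + (t-1)*x*(A*B*Ss^3)
        + (3*A*Cs^2*Ss)*(((t-1)*x)*B) + 3*((t-1)*x)*(B^2*Cs*Ss^2) := by
    rw [hc_def]; ring
  have T1 : (t-1)*x*(Cs*Ss^2) ≤ (t-1)*x*(A^2*Cs*Ss^2) := by
    apply mul_le_mul_of_nonneg_left _ (mul_pos ht1 hx).le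
    nlinarith [hA2, sq_nonneg B, mul_pos hCs0 hSs2]
  have hcoef : (0:ℝ) < 3*A*Cs^2*Ss :=
    mul_pos (mul_pos (mul_pos (by norm_num) hA0) (pow_pos hCs0 2)) hSs0
  have T3 : 3*x*Cs*Ss^2 < (3*A*Cs^2*Ss)*(((t-1)*x)*B) := by
    have T3c : 3*x*Cs*Ss^2 < 3*A*x*Cs*Ss^2 := by
      nlinarith [mul_pos (mul_pos hx hCs0) hSs2, hA1]
    have T3b : 3*A*x*Cs*Ss*Ss ≤ 3*A*x*Cs*Ss*(((t-1)*x)*Cs) :=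
      mul_le_mul_of_nonneg_left hsCs
        (mul_pos (mul_pos (mul_pos (mul_pos (by norm_num : (0:ℝ)<3) hA0) hx) hCs0) hSs0).le
    have T3eq : 3*A*x*Cs*Ss*(((t-1)*x)*Cs) = (3*A*Cs^2*Ss)*(((t-1)*x)*x) := by ring
    have T3a : (3*A*Cs^2*Ss)*(((t-1)*x)*x) < (3*A*Cs^2*Ss)*(((t-1)*x)*B) := by
      apply mul_lt_mul_of_pos_left _ hcoef
      exact mul_lt_mul_of_pos_left hBx (mul_pos ht1 hx)
    have e : 3*A*x*Cs*Ss*Ss = 3*A*x*Cs*Ss^2 := by ring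
    rw [e] at T3b
    rw [T3eq] at T3b
    linarith
  have T2 : (0:ℝ) ≤ (t-1)*x*(A*B*Ss^3) :=
    (mul_pos (mul_pos ht1 hx) (mul_pos (mul_pos hA0 hB0) (pow_pos hSs0 3))).le
  have T4 : (0:ℝ) ≤ 3*((t-1)*x)*(B^2*Cs*Ss^2) :=
    (mul_pos (mul_pos (by norm_num : (0:ℝ)<3) (mul_pos ht1 hx))
      (mul_pos (mul_pos (pow_pos hB0 2) hCs0) hSs2)).le
  have hlhs : (2 + t) / 3 * (x * Ss ^ 2) * (3 * Cs) = (t-1)*x*(Cs*Ss^2) + 3*x*Cs*Ss^2 := by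
    ring
  rw [hlhs]
  linarith [step1, T1, T2, T3, T4, hexp.ge, hexp.le]

/-- For every `t > 1` and `x > 0`,
`S(x,t) = t + (t−1)·cosh²(tx)/sinh²((t−1)x) − cosh(x)cosh(tx)/(x·sinh((t−1)x))`
satisfies `S(x,t) > (2+4t)/3`. -/
theorem S_gt (t x : ℝ) (ht : 1 < t) (hx : 0 < x) :
    (2 + 4 * t) / 3 <
      t + (t - 1) * (Real.cosh (t * x)) ^ 2 / (Real.sinh ((t - 1) * x)) ^ 2 -
        Real.cosh x * Real.cosh (t * x) / (x * Real.sinh ((t - 1) * x)) := by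
  set s : ℝ := (t - 1) * x with hs_def
  have hs : 0 < s := mul_pos (by linarith) hx
  set A := Real.cosh x with hA
  set B := Real.sinh x with hB
  set Cs := Real.cosh s with hCs
  set Ss := Real.sinh s with hSs
  have hSs0 : 0 < Ss := Real.sinh_pos_iff.2 hs
  have hCs0 : (0:ℝ) < Cs := lt_of_lt_of_le one_pos (Real.one_le_cosh s)
  have hA1 : 1 < A := Real.one_lt_cosh.2 hx.ne'
  have hA0 : (0:ℝ) < A := by linarith
  have hBx : x < B := Real.self_lt_sinh_iff.2 hx
  have hB0 : (0:ℝ) < B := by linarith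
  have hc : Real.cosh (t * x) = A * Cs + B * Ss := by
    have h1 : t * x = x + s := by rw [hs_def]; ring
    rw [h1, Real.cosh_add]
  have hA2 : A ^ 2 = 1 + B ^ 2 := by rw [hA, hB, Real.cosh_sq']
  have hkey := key_ineq s hs.le
  have hsCs : Ss ≤ s * Cs := aux1 s hs.le
  set c := A * Cs + B * Ss with hc_def
  have hc_pos : 0 < c := add_pos (mul_pos hA0 hCs0) (mul_pos hB0 hSs0)
  have ht1 : (0:ℝ) < t - 1 := by linarith
  have hSs2 : (0:ℝ) < Ss ^ 2 := pow_pos hSs0 2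
  have hxSs2 : (0:ℝ) < x * Ss ^ 2 := mul_pos hx hSs2
  -- main polynomial inequality
  have h1 : s * Ss ^ 2 ≤ 3 * Cs * (s * Cs - Ss) := by
    have h2 : Ss ^ 2 = Cs ^ 2 - 1 := by
      have := Real.cosh_sq' s; linarith
    nlinarith [hkey, h2]
  have pm := poly_main t x s A B Cs Ss hs_def ht1 hx hA1 hBx hCs0 hSs0 hsCs h1 hA2
  rw [← hc_def] at pm
  have main : (2 + t) / 3 < ((t - 1) * c ^ 2 * x - A * c * Ss) / (x * Ss ^ 2) := by
    rw [lt_div_iff₀ hxSs2]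
    linarith [pm]
  -- convert main to goal
  have hSne : Ss ≠ 0 := hSs0.ne'
  have hxne : x ≠ 0 := hx.ne'
  have e1 : (t - 1) * (Real.cosh (t * x)) ^ 2 / Ss ^ 2 = (t - 1) * c ^ 2 * x / (x * Ss ^ 2) := by
    rw [hc]
    field_simp
  have e2 : A * Real.cosh (t * x) / (x * Ss) = A * c * Ss / (x * Ss ^ 2) := by
    rw [hc]
    field_simp
  rw [e1, e2]
  have hfrac : (t - 1) * c ^ 2 * x / (x * Ss ^ 2) - A * c * Ss / (x * Ss ^ 2)
      = ((t - 1) * c ^ 2 * x - A * c * Ss) / (x * Ss ^ 2) := (sub_div _ _ _).symm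
  linarith [main, hfrac]
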